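/- Let M : ℕ × ℕ → ℝ carry a block structure and suppose M = LU entrywise, where L is block-lower triangular with unit diagonal blocks L(i,i) = I and U is block-upper triangular admitting a block-upper triangular two-sided entrywise inverse U⁻¹ (all occurring entrywise products being finite sums by triangularity). Then every finite section M[k] = L[k]U[k] is invertible, and for every k ∈ ℕ and every block index 1 ≤ i ≤ k, the (i,k) block of the inverse of the finite section equals the corresponding block of U⁻¹: (M[k]⁻¹)(i,k) = U⁻¹(i,k). -/

import Mathlib

abbrev Mat := ℕ → ℕ → ℝ

def IsBlockStructure (n : ℕ → ℕ) : Prop := StrictMono n ∧ n 0 = 0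

def InBlock (n : ℕ → ℕ) (i p : ℕ) : Prop := n i ≤ p ∧ p < n (i + 1)

def BlockLower (n : ℕ → ℕ) (M : Mat) : Prop :=
  ∀ i j p q, InBlock n i p → InBlock n j q → i < j → M p q = 0

def BlockUpper (n : ℕ → ℕ) (M : Mat) : Prop :=
  ∀ i j p q, InBlock n i p → InBlock n j q → j < i → M p q = 0

def idMat : Mat := fun p q => if p = q then 1 else 0

def UnitDiagBlocks (n : ℕ → ℕ) (M : Mat) : Prop :=
  ∀ i p q, InBlock n i p → InBlock n i q → M p q = idMat p q

/-- The finite section of `M` on the indices `{0,…,N−1}`. -/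
def sect (M : Mat) (N : ℕ) : Matrix (Fin N) (Fin N) ℝ := Matrix.of fun i j => M i j


lemma exists_block {nseq : ℕ → ℕ} (hn : IsBlockStructure nseq) (b : ℕ) :
    ∃ j, InBlock nseq j b := by
  obtain ⟨hsm, h0⟩ := hn
  have hex : ∃ j, b < nseq (j + 1) :=
    ⟨b, lt_of_lt_of_le (Nat.lt_succ_self b) hsm.le_apply⟩
  refine ⟨Nat.find hex, ?_, Nat.find_spec hex⟩
  rcases Nat.eq_zero_or_pos (Nat.find hex) with h | h
  · rw [h, h0]; exact Nat.zero_le b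
  · have h2 := Nat.find_min hex (Nat.sub_lt h one_pos)
    rw [not_lt] at h2
    have he : Nat.find hex - 1 + 1 = Nat.find hex := by omega
    rwa [he] at h2

lemma block_le {nseq : ℕ → ℕ} (hn : IsBlockStructure nseq) {j k b : ℕ}
    (hb : InBlock nseq j b) (h : b < nseq (k + 1)) : j ≤ k := by
  by_contra hc
  rw [not_le] at hc
  exact absurd (lt_of_lt_of_le h (hn.1.monotone hc)) (not_lt.2 hb.1)

lemma block_gt {nseq : ℕ → ℕ} (hn : IsBlockStructure nseq) {j k b : ℕ}
    (hb : InBlock nseq j b) (h : nseq (k + 1) ≤ b) : k < j := by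
  by_contra hc
  rw [not_lt] at hc
  exact absurd (lt_of_lt_of_le hb.2 (hn.1.monotone (Nat.succ_le_succ hc))) (not_lt.2 h)


/-- if `M = LU` with `L` block-lower triangular with unit diagonal
blocks and `U` block-upper triangular with block-upper triangular two-sided inverse
`U⁻¹`, then every finite section `M[k]` (the first `k+1` blocks) is invertible and the
blocks `(M[k]⁻¹)(i,k)` of the last block column of its inverse coincide with those of
`U⁻¹`. -/
theorem section_inverse_last_block_column
    (nseq : ℕ → ℕ) (hn : IsBlockStructure nseq)
    (M L U Uinv : Mat)
    (hL : BlockLower nseq L) (hLd : UnitDiagBlocks nseq L)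
    (hU : BlockUpper nseq U) (hUinvT : BlockUpper nseq Uinv)
    (hLU : ∀ p q, M p q = ∑' r, L p r * U r q)
    (hUUinv : ∀ p q, (∑' r, U p r * Uinv r q) = idMat p q)
    (hUinvU : ∀ p q, (∑' r, Uinv p r * U r q) = idMat p q) :
    ∀ k : ℕ, IsUnit (sect M (nseq (k + 1))) ∧
      ∀ (p q : ℕ) (hp : p < nseq (k + 1)) (_ : nseq k ≤ q) (hq : q < nseq (k + 1)),
        (sect M (nseq (k + 1)))⁻¹ ⟨p, hp⟩ ⟨q, hq⟩ = Uinv p q := by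
  intro k
  set N := nseq (k + 1) with hN
  set A := sect M N with hAdef
  set Lk := sect L N with hLkdef
  set Uk := sect U N with hUkdef
  set Vk := sect Uinv N with hVkdef
  -- every index below N lies in a block of index ≤ k
  have hblk : ∀ p : Fin N, ∃ i, i ≤ k ∧ InBlock nseq i (p : ℕ) := by
    intro p
    obtain ⟨i, hi⟩ := exists_block hn (p : ℕ)
    exact ⟨i, block_le hn hi p.2, hi⟩
  -- A = Lk * Uk
  have hA : A = Lk * Uk := by
    ext p q
    obtain ⟨i, hik, hip⟩ := hblk p
    have h0 : ∀ b ∉ Finset.range N, L (p : ℕ) b * U b (q : ℕ) = 0 := by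
      intro b hb
      rw [Finset.mem_range, not_lt] at hb
      obtain ⟨j, hj⟩ := exists_block hn b
      rw [hL i j p b hip hj (lt_of_le_of_lt hik (block_gt hn hj hb)), zero_mul]
    simp only [hAdef, hLkdef, hUkdef, sect, Matrix.mul_apply, Matrix.of_apply]
    rw [hLU, tsum_eq_sum h0, ← Fin.sum_univ_eq_sum_range]
  -- Uk * Vk = 1 and Vk * Uk = 1
  have hUV : Uk * Vk = 1 := by
    ext p q
    obtain ⟨iq, hiqk, hiq⟩ := hblk q
    have h0 : ∀ b ∉ Finset.range N, U (p : ℕ) b * Uinv b (q : ℕ) = 0 := by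
      intro b hb
      rw [Finset.mem_range, not_lt] at hb
      obtain ⟨j, hj⟩ := exists_block hn b
      rw [hUinvT j iq b q hj hiq (lt_of_le_of_lt hiqk (block_gt hn hj hb)), mul_zero]
    have h1 := hUUinv (p : ℕ) (q : ℕ)
    rw [tsum_eq_sum h0, ← Fin.sum_univ_eq_sum_range] at h1
    simp only [hUkdef, hVkdef, sect, Matrix.mul_apply, Matrix.of_apply, Matrix.one_apply]
    rw [h1, idMat]
    simp [Fin.ext_iff]
  have hVU : Vk * Uk = 1 := by
    ext p q
    obtain ⟨iq, hiqk, hiq⟩ := hblk q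
    have h0 : ∀ b ∉ Finset.range N, Uinv (p : ℕ) b * U b (q : ℕ) = 0 := by
      intro b hb
      rw [Finset.mem_range, not_lt] at hb
      obtain ⟨j, hj⟩ := exists_block hn b
      rw [hU j iq b q hj hiq (lt_of_le_of_lt hiqk (block_gt hn hj hb)), mul_zero]
    have h1 := hUinvU (p : ℕ) (q : ℕ)
    rw [tsum_eq_sum h0, ← Fin.sum_univ_eq_sum_range] at h1
    simp only [hVkdef, hUkdef, sect, Matrix.mul_apply, Matrix.of_apply, Matrix.one_apply]
    rw [h1, idMat]
    simp [Fin.ext_iff]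
  -- Lk is lower triangular with unit diagonal
  have hLtri : Lk.BlockTriangular OrderDual.toDual := by
    intro p q hpq
    have hpq' : (p : ℕ) < (q : ℕ) := hpq
    obtain ⟨i, _, hip⟩ := hblk p
    obtain ⟨j, _, hjq⟩ := hblk q
    rcases lt_trichotomy i j with h | h | h
    · exact hL i j p q hip hjq h
    · subst h
      have : L (p : ℕ) (q : ℕ) = idMat p q := hLd i p q hip hjq
      simp only [hLkdef, sect, Matrix.of_apply]
      rw [this, idMat]
      simp [Nat.ne_of_lt hpq']
    · exact absurd (lt_of_lt_of_le hjq.2 (le_trans (hn.1.monotone h) hip.1))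
        (not_lt.2 (le_of_lt hpq'))
  have hLdiag : ∀ p : Fin N, Lk p p = 1 := by
    intro p
    obtain ⟨i, _, hip⟩ := hblk p
    have : L (p : ℕ) (p : ℕ) = idMat p p := hLd i p p hip hip
    simp only [hLkdef, sect, Matrix.of_apply]
    rw [this, idMat]; simp
  have hLdet : Lk.det = 1 := by
    rw [Matrix.det_of_lowerTriangular Lk hLtri]
    simp [hLdiag]
  have hLunit : IsUnit Lk.det := by rw [hLdet]; exact isUnit_one
  have hLinv : Lk⁻¹ * Lk = 1 := Matrix.nonsing_inv_mul Lk hLunit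
  -- inverse of A
  have hBA : (Vk * Lk⁻¹) * A = 1 := by
    rw [hA, Matrix.mul_assoc, ← Matrix.mul_assoc Lk⁻¹, hLinv, Matrix.one_mul, hVU]
  have hAinv : A⁻¹ = Vk * Lk⁻¹ := Matrix.inv_eq_left_inv hBA
  have hAunit : IsUnit A :=
    @isUnit_of_invertible _ _ A (invertibleOfLeftInverse A (Vk * Lk⁻¹) hBA)
  refine ⟨hAunit, ?_⟩
  intro p q hp hqk hq
  have hAL : A⁻¹ * Lk = Vk := by
    rw [hAinv, Matrix.mul_assoc, hLinv, Matrix.mul_one]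
  -- column q of Lk is the standard basis vector
  have hcol : ∀ r : Fin N, Lk r ⟨q, hq⟩ = if r = ⟨q, hq⟩ then 1 else 0 := by
    intro r
    obtain ⟨i, hik, hir⟩ := hblk r
    rcases lt_or_eq_of_le hik with h | h
    · have h1 : L (r : ℕ) q = 0 := hL i k r q hir ⟨hqk, hq⟩ h
      have h2 : (r : ℕ) < q := lt_of_lt_of_le hir.2 (le_trans (hn.1.monotone h) hqk)
      rw [if_neg (by simp [Fin.ext_iff]; omega)]
      exact h1
    · subst h
      have : L (r : ℕ) q = idMat r q := hLd i r q hir ⟨hqk, hq⟩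
      simp only [hLkdef, sect, Matrix.of_apply]
      rw [this, idMat]
      simp [Fin.ext_iff]
  have : Vk ⟨p, hp⟩ ⟨q, hq⟩ = A⁻¹ ⟨p, hp⟩ ⟨q, hq⟩ := by
    rw [← hAL, Matrix.mul_apply]
    rw [Finset.sum_congr rfl fun r _ => by rw [hcol r]]
    simp
  rw [← this]
  rfl
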